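/- If x₁, x₂, y₁, y₂ are numbers with x₁ < x₂ and y₁ < y₂, then x₁·y₂ + x₂·y₁ < x₁·y₁ + x₂·y₂. In particular, if y > 0 is a number, then x₁ < x₂ implies x₁·y < x₂·y. -/

import Mathlib

universe u

noncomputable section

namespace SetTheory

/-- Pre-games, as in the older Mathlib's `SetTheory.PGame` (removed from Mathlib since). -/
inductive PGame : Type (u + 1)
  | mk : ∀ α β : Type u, (α → PGame) → (β → PGame) → PGame

namespace PGame

/-- The pair (`x ≤ y`, `x ⧏ y`), defined by simultaneous recursion. -/
def leLF : PGame.{u} → PGame.{u} → Prop × Prop := by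
  intro x
  induction x with
  | mk xl xr xL xR IHxl IHxr =>
    intro y
    induction y with
    | mk yl yr yL yR IHyl IHyr =>
      exact ((∀ i, (IHxl i (mk yl yr yL yR)).2) ∧ (∀ j, (IHyr j).2),
        (∃ i, (IHyl i).1) ∨ (∃ j, (IHxr j (mk yl yr yL yR)).1))

instance : LE PGame.{u} := ⟨fun x y => (leLF x y).1⟩

instance : LT PGame.{u} := ⟨fun x y => x ≤ y ∧ ¬y ≤ x⟩

/-- A pre-game is numeric if all its options are numeric and every left option is
less than every right option. -/
def Numeric : PGame.{u} → Prop
  | mk _ _ L R => (∀ i j, L i < R j) ∧ (∀ i, Numeric (L i)) ∧ ∀ j, Numeric (R j)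

instance : Zero PGame.{u} := ⟨mk PEmpty PEmpty PEmpty.elim PEmpty.elim⟩

/-- Negation of a pre-game. -/
def neg : PGame.{u} → PGame.{u}
  | mk xl xr xL xR => mk xr xl (fun j => neg (xR j)) (fun i => neg (xL i))

instance : Neg PGame.{u} := ⟨neg⟩

instance : Add PGame.{u} := ⟨fun x y => by
  induction x generalizing y with
  | mk xl xr xL xR IHxl IHxr =>
    induction y with
    | mk yl yr yL yR IHyl IHyr =>
      exact mk (xl ⊕ yl) (xr ⊕ yr)
        (Sum.rec (fun i => IHxl i (mk yl yr yL yR)) (fun i => IHyl i))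
        (Sum.rec (fun i => IHxr i (mk yl yr yL yR)) (fun i => IHyr i))⟩

instance : Sub PGame.{u} := ⟨fun x y => x + -y⟩

instance : Mul PGame.{u} := ⟨fun x y => by
  induction x generalizing y with
  | mk xl xr xL xR IHxl IHxr =>
    induction y with
    | mk yl yr yL yR IHyl IHyr =>
      exact mk ((xl × yl) ⊕ (xr × yr)) ((xl × yr) ⊕ (xr × yl))
        (Sum.rec (fun p => IHxl p.1 (mk yl yr yL yR) + IHyl p.2 - IHxl p.1 (yL p.2))
          (fun p => IHxr p.1 (mk yl yr yL yR) + IHyr p.2 - IHxr p.1 (yR p.2)))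
        (Sum.rec (fun p => IHxl p.1 (mk yl yr yL yR) + IHyr p.2 - IHxl p.1 (yR p.2))
          (fun p => IHxr p.1 (mk yl yr yL yR) + IHyl p.2 - IHxr p.1 (yL p.2)))⟩

end PGame

end SetTheory

end

open SetTheory PGame

namespace SetTheory
namespace PGame

noncomputable section

def LF (x y : PGame.{u}) : Prop := (leLF x y).2

theorem pg_le_mk_iff {xl xr yl yr : Type u} {xL : xl → PGame.{u}} {xR : xr → PGame.{u}}
    {yL : yl → PGame.{u}} {yR : yr → PGame.{u}} :
    mk xl xr xL xR ≤ mk yl yr yL yR ↔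
      (∀ i, LF (xL i) (mk yl yr yL yR)) ∧ ∀ j, LF (mk xl xr xL xR) (yR j) := Iff.rfl

theorem pg_lf_mk_iff {xl xr yl yr : Type u} {xL : xl → PGame.{u}} {xR : xr → PGame.{u}}
    {yL : yl → PGame.{u}} {yR : yr → PGame.{u}} :
    LF (mk xl xr xL xR) (mk yl yr yL yR) ↔
      (∃ i, mk xl xr xL xR ≤ yL i) ∨ ∃ j, xR j ≤ mk yl yr yL yR := Iff.rfl

theorem pg_lf_iff_not_le_aux (x y : PGame.{u}) : (LF x y ↔ ¬ y ≤ x) ∧ (LF y x ↔ ¬ x ≤ y) := by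
  induction x generalizing y with
  | mk xl xr xL xR ihxl ihxr =>
    induction y with
    | mk yl yr yL yR ihyl ihyr =>
      constructor
      · rw [pg_lf_mk_iff, pg_le_mk_iff, not_and_or, not_forall, not_forall]
        exact or_congr (exists_congr fun i => by rw [(ihyl i).2, not_not])
          (exists_congr fun j => by rw [(ihxr j _).2, not_not])
      · rw [pg_lf_mk_iff, pg_le_mk_iff, not_and_or, not_forall, not_forall]
        exact or_congr (exists_congr fun i => by rw [(ihxl i _).1, not_not])
          (exists_congr fun j => by rw [(ihyr j).1, not_not])

theorem pg_lf_iff_not_le (x y : PGame.{u}) : LF x y ↔ ¬ y ≤ x := (pg_lf_iff_not_le_aux x y).1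

def LeftMoves : PGame.{u} → Type u
  | mk l _ _ _ => l

def RightMoves : PGame.{u} → Type u
  | mk _ r _ _ => r

def moveLeft : (x : PGame.{u}) → LeftMoves x → PGame.{u}
  | mk _ _ L _ => L

def moveRight : (x : PGame.{u}) → RightMoves x → PGame.{u}
  | mk _ _ _ R => R

theorem pg_moveLeft_mk {l r : Type u} {L : l → PGame.{u}} {R : r → PGame.{u}}
    (i : LeftMoves (mk l r L R)) : (mk l r L R).moveLeft i = L i := rfl

theorem pg_moveRight_mk {l r : Type u} {L : l → PGame.{u}} {R : r → PGame.{u}}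
    (j : RightMoves (mk l r L R)) : (mk l r L R).moveRight j = R j := rfl

theorem pg_le_iff (x y : PGame.{u}) :
    x ≤ y ↔ (∀ i, ¬ y ≤ x.moveLeft i) ∧ ∀ j, ¬ y.moveRight j ≤ x := by
  cases x with
  | mk xl xr xL xR =>
    cases y with
    | mk yl yr yL yR =>
      rw [pg_le_mk_iff]
      exact and_congr (forall_congr' fun i => pg_lf_iff_not_le _ _)
        (forall_congr' fun j => pg_lf_iff_not_le _ _)

theorem pg_lf_iff (x y : PGame.{u}) :
    ¬ y ≤ x ↔ (∃ i, x ≤ y.moveLeft i) ∨ ∃ j, x.moveRight j ≤ y := by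
  cases x with
  | mk xl xr xL xR =>
    cases y with
    | mk yl yr yL yR =>
      rw [← pg_lf_iff_not_le]
      exact pg_lf_mk_iff

theorem pg_le_refl (x : PGame.{u}) : x ≤ x := by
  induction x with
  | mk xl xr xL xR ihl ihr =>
    rw [pg_le_iff]
    exact ⟨fun i => (pg_lf_iff _ _).2 (Or.inl ⟨i, ihl i⟩),
      fun j => (pg_lf_iff _ _).2 (Or.inr ⟨j, ihr j⟩)⟩

theorem pg_not_le_moveLeft (x : PGame.{u}) (i : x.LeftMoves) : ¬ x ≤ x.moveLeft i :=
  (pg_lf_iff _ _).2 (Or.inl ⟨i, pg_le_refl _⟩)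

theorem pg_not_moveRight_le (x : PGame.{u}) (j : x.RightMoves) : ¬ x.moveRight j ≤ x :=
  (pg_lf_iff _ _).2 (Or.inr ⟨j, pg_le_refl _⟩)

theorem pg_le_trans_aux (x y z : PGame.{u}) :
    (x ≤ y → y ≤ z → x ≤ z) ∧ (y ≤ z → z ≤ x → y ≤ x) ∧ (z ≤ x → x ≤ y → z ≤ y) := by
  induction x generalizing y z with
  | mk xl xr xL xR ihxl ihxr =>
    induction y generalizing z with
    | mk yl yr yL yR ihyl ihyr =>
      induction z with
      | mk zl zr zL zR ihzl ihzr =>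
        refine ⟨fun h1 h2 => ?_, fun h1 h2 => ?_, fun h1 h2 => ?_⟩
        · exact (pg_le_iff _ _).2 ⟨fun i h => ((pg_le_iff _ _).1 h1).1 i ((ihxl i _ _).2.1 h2 h),
            fun j h => ((pg_le_iff _ _).1 h2).2 j ((ihzr j).2.2 h h1)⟩
        · exact (pg_le_iff _ _).2 ⟨fun i h => ((pg_le_iff _ _).1 h1).1 i ((ihyl i _).2.2 h2 h),
            fun j h => ((pg_le_iff _ _).1 h2).2 j ((ihxr j _ _).1 h h1)⟩
        · exact (pg_le_iff _ _).2 ⟨fun i h => ((pg_le_iff _ _).1 h1).1 i ((ihzl i).1 h2 h),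
            fun j h => ((pg_le_iff _ _).1 h2).2 j ((ihyr j _).2.1 h h1)⟩

theorem pg_le_trans {x y z : PGame.{u}} (h1 : x ≤ y) (h2 : y ≤ z) : x ≤ z :=
  (pg_le_trans_aux x y z).1 h1 h2

theorem pg_le_of_moves {x y : PGame.{u}} (hl : ∀ i, ∃ i', x.moveLeft i ≤ y.moveLeft i')
    (hr : ∀ j, ∃ j', x.moveRight j' ≤ y.moveRight j) : x ≤ y := by
  rw [pg_le_iff]
  refine ⟨fun i h => ?_, fun j h => ?_⟩
  · obtain ⟨i', hi⟩ := hl i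
    exact pg_not_le_moveLeft y i' (pg_le_trans h hi)
  · obtain ⟨j', hj⟩ := hr j
    exact pg_not_moveRight_le x j' (pg_le_trans hj h)

theorem pg_lf_mk_right {l r : Type u} {L : l → PGame.{u}} {R : r → PGame.{u}} {c : PGame.{u}}
    (j : r) (h : R j ≤ c) : ¬ c ≤ mk l r L R :=
  fun hc => pg_not_moveRight_le (mk l r L R) j (pg_le_trans h hc)

theorem pg_lf_mk_left {l r : Type u} {L : l → PGame.{u}} {R : r → PGame.{u}} {c : PGame.{u}}
    (i : l) (h : c ≤ L i) : ¬ mk l r L R ≤ c :=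
  fun hc => pg_not_le_moveLeft (mk l r L R) i (pg_le_trans hc h)

theorem pg_add_eq (x y : PGame.{u}) : x + y = mk (x.LeftMoves ⊕ y.LeftMoves)
    (x.RightMoves ⊕ y.RightMoves)
    (Sum.elim (fun i => x.moveLeft i + y) (fun k => x + y.moveLeft k))
    (Sum.elim (fun j => x.moveRight j + y) (fun k => x + y.moveRight k)) := by
  cases x; cases y; rfl

theorem pg_add_lf_R1 {a b c : PGame.{u}} (j : a.RightMoves) (h : a.moveRight j + b ≤ c) :
    ¬ c ≤ a + b := by
  rw [pg_add_eq a b]; exact pg_lf_mk_right (Sum.inl j) h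

theorem pg_add_lf_R2 {a b c : PGame.{u}} (j : b.RightMoves) (h : a + b.moveRight j ≤ c) :
    ¬ c ≤ a + b := by
  rw [pg_add_eq a b]; exact pg_lf_mk_right (Sum.inr j) h

theorem pg_add_lf_L1 {a b c : PGame.{u}} (i : a.LeftMoves) (h : c ≤ a.moveLeft i + b) :
    ¬ a + b ≤ c := by
  rw [pg_add_eq a b]; exact pg_lf_mk_left (Sum.inl i) h

theorem pg_add_lf_L2 {a b c : PGame.{u}} (i : b.LeftMoves) (h : c ≤ a + b.moveLeft i) :
    ¬ a + b ≤ c := by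
  rw [pg_add_eq a b]; exact pg_lf_mk_left (Sum.inr i) h

theorem pg_add_le_add_aux (y : PGame.{u}) : ∀ x x' : PGame.{u},
    (x ≤ x' → x + y ≤ x' + y) ∧ (¬ x' ≤ x → ¬ x' + y ≤ x + y) := by
  induction y with
  | mk yl yr yL yR ihyl ihyr =>
    intro x
    induction x with
    | mk xl xr xL xR ihxl ihxr =>
      intro x'
      induction x' with
      | mk zl zr zL zR ihzl ihzr =>
        refine ⟨fun h => ?_, fun h => ?_⟩
        · rw [pg_le_iff]
          refine ⟨?_, ?_⟩
          · rintro (i | k)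
            · exact (ihxl i _).2 (((pg_le_iff _ _).1 h).1 i)
            · exact fun h' => pg_not_le_moveLeft (mk zl zr zL zR + mk yl yr yL yR) (Sum.inr k)
                (pg_le_trans h' ((ihyl k _ _).1 h))
          · rintro (j | k)
            · exact (ihzr j).2 (((pg_le_iff _ _).1 h).2 j)
            · exact fun h' => pg_not_moveRight_le (mk xl xr xL xR + mk yl yr yL yR) (Sum.inr k)
                (pg_le_trans ((ihyr k _ _).1 h) h')
        · rcases (pg_lf_iff _ _).1 h with ⟨i, hi⟩ | ⟨j, hj⟩
          · exact fun h' => pg_not_le_moveLeft (mk zl zr zL zR + mk yl yr yL yR) (Sum.inl i)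
              (pg_le_trans h' ((ihzl i).1 hi))
          · exact fun h' => pg_not_moveRight_le (mk xl xr xL xR + mk yl yr yL yR) (Sum.inl j)
              (pg_le_trans ((ihxr j _).1 hj) h')

theorem pg_add_le_add_right {x x' : PGame.{u}} (h : x ≤ x') (y : PGame.{u}) : x + y ≤ x' + y :=
  (pg_add_le_add_aux y x x').1 h

theorem pg_add_comm_le (x y : PGame.{u}) : x + y ≤ y + x := by
  induction x generalizing y with
  | mk xl xr xL xR ihxl ihxr =>
    induction y with
    | mk yl yr yL yR ihyl ihyr =>
      refine pg_le_of_moves ?_ ?_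
      · rintro (i | k)
        · exact ⟨Sum.inr i, ihxl i _⟩
        · exact ⟨Sum.inl k, ihyl k⟩
      · rintro (k | j)
        · exact ⟨Sum.inr k, ihyr k⟩
        · exact ⟨Sum.inl j, ihxr j _⟩

theorem pg_add_le_add_left {y y' : PGame.{u}} (h : y ≤ y') (x : PGame.{u}) : x + y ≤ x + y' :=
  pg_le_trans (pg_add_comm_le x y) (pg_le_trans (pg_add_le_add_right h x) (pg_add_comm_le y' x))

theorem pg_zero_add_le (x : PGame.{u}) : 0 + x ≤ x ∧ x ≤ 0 + x := by
  induction x with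
  | mk xl xr xL xR ihl ihr =>
    constructor
    · refine pg_le_of_moves ?_ ?_
      · rintro (i | i)
        · exact PEmpty.elim i
        · exact ⟨i, (ihl i).1⟩
      · intro j
        exact ⟨Sum.inr j, (ihr j).1⟩
    · refine pg_le_of_moves ?_ ?_
      · intro i
        exact ⟨Sum.inr i, (ihl i).2⟩
      · rintro (j | j)
        · exact PEmpty.elim j
        · exact ⟨j, (ihr j).2⟩

theorem pg_add_assoc_le (x y z : PGame.{u}) :
    (x + y) + z ≤ x + (y + z) ∧ x + (y + z) ≤ (x + y) + z := by
  induction x generalizing y z with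
  | mk xl xr xL xR ihxl ihxr =>
    induction y generalizing z with
    | mk yl yr yL yR ihyl ihyr =>
      induction z with
      | mk zl zr zL zR ihzl ihzr =>
        constructor
        · refine pg_le_of_moves ?_ ?_
          · rintro ((i | i) | i)
            · exact ⟨Sum.inl i, (ihxl i _ _).1⟩
            · exact ⟨Sum.inr (Sum.inl i), (ihyl i _).1⟩
            · exact ⟨Sum.inr (Sum.inr i), (ihzl i).1⟩
          · rintro (i | (i | i))
            · exact ⟨Sum.inl (Sum.inl i), (ihxr i _ _).1⟩
            · exact ⟨Sum.inl (Sum.inr i), (ihyr i _).1⟩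
            · exact ⟨Sum.inr i, (ihzr i).1⟩
        · refine pg_le_of_moves ?_ ?_
          · rintro (i | (i | i))
            · exact ⟨Sum.inl (Sum.inl i), (ihxl i (mk yl yr yL yR) (mk zl zr zL zR)).2⟩
            · exact ⟨Sum.inl (Sum.inr i), (ihyl i _).2⟩
            · exact ⟨Sum.inr i, (ihzl i).2⟩
          · rintro ((i | i) | i)
            · exact ⟨Sum.inl i, (ihxr i (mk yl yr yL yR) (mk zl zr zL zR)).2⟩
            · exact ⟨Sum.inr (Sum.inl i), (ihyr i _).2⟩
            · exact ⟨Sum.inr (Sum.inr i), (ihzr i).2⟩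

theorem pg_neg_le_neg_aux (x y : PGame.{u}) : (-y ≤ -x ↔ x ≤ y) ∧ (-x ≤ -y ↔ y ≤ x) := by
  induction x generalizing y with
  | mk xl xr xL xR ihxl ihxr =>
    induction y with
    | mk yl yr yL yR ihyl ihyr =>
      constructor
      · rw [pg_le_iff (-mk yl yr yL yR), pg_le_iff (mk xl xr xL xR)]
        exact ⟨fun h => ⟨fun j => (not_congr (ihxl j _).2).1 (h.2 j),
            fun i => (not_congr (ihyr i).2).1 (h.1 i)⟩,
          fun h => ⟨fun i => (not_congr (ihyr i).2).2 (h.2 i),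
            fun j => (not_congr (ihxl j _).2).2 (h.1 j)⟩⟩
      · rw [pg_le_iff (-mk xl xr xL xR), pg_le_iff (mk yl yr yL yR)]
        exact ⟨fun h => ⟨fun j => (not_congr (ihyl j).1).1 (h.2 j),
            fun i => (not_congr (ihxr i _).1).1 (h.1 i)⟩,
          fun h => ⟨fun i => (not_congr (ihxr i _).1).2 (h.2 i),
            fun j => (not_congr (ihyl j).1).2 (h.1 j)⟩⟩

theorem pg_neg_le_neg_iff {x y : PGame.{u}} : -y ≤ -x ↔ x ≤ y := (pg_neg_le_neg_aux x y).1

theorem pg_neg_add_le_zero (x : PGame.{u}) : -x + x ≤ 0 ∧ 0 ≤ -x + x := by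
  induction x with
  | mk xl xr xL xR ihl ihr =>
    constructor
    · rw [pg_le_iff]
      refine ⟨?_, fun j => PEmpty.elim j⟩
      rintro (i | i)
      · exact pg_add_lf_R2 (a := -(xR i)) (b := mk xl xr xL xR) i (ihr i).1
      · exact pg_add_lf_R1 (a := -mk xl xr xL xR) (b := xL i) i (ihl i).1
    · rw [pg_le_iff]
      refine ⟨fun i => PEmpty.elim i, ?_⟩
      rintro (i | i)
      · exact pg_add_lf_L2 (a := -(xL i)) (b := mk xl xr xL xR) i (ihl i).2
      · exact pg_add_lf_L1 (a := -mk xl xr xL xR) (b := xR i) i (ihr i).2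

instance pgSetoid : Setoid PGame.{u} :=
  ⟨fun x y => x ≤ y ∧ y ≤ x, ⟨fun x => ⟨pg_le_refl x, pg_le_refl x⟩, fun h => ⟨h.2, h.1⟩,
    fun h1 h2 => ⟨pg_le_trans h1.1 h2.1, pg_le_trans h2.2 h1.2⟩⟩⟩

theorem pg_equiv_iff {x y : PGame.{u}} : x ≈ y ↔ x ≤ y ∧ y ≤ x := Iff.rfl

def Gm : Type (u + 1) := Quotient pgSetoid.{u}

def mkG (x : PGame.{u}) : Gm.{u} := Quotient.mk pgSetoid x

theorem mkG_eq {x y : PGame.{u}} : mkG x = mkG y ↔ x ≤ y ∧ y ≤ x :=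
  ⟨fun h => Quotient.exact h, fun h => Quotient.sound h⟩

theorem Gm_ind {p : Gm.{u} → Prop} (h : ∀ x, p (mkG x)) (a : Gm.{u}) : p a := Quotient.ind h a

instance : LE Gm.{u} := ⟨Quotient.lift₂ (fun x y : PGame.{u} => x ≤ y)
  (fun a1 b1 a2 b2 ha hb => propext ⟨fun h => pg_le_trans (pg_le_trans ha.2 h) hb.1,
    fun h => pg_le_trans (pg_le_trans ha.1 h) hb.2⟩)⟩

theorem mkG_le {x y : PGame.{u}} : mkG x ≤ mkG y ↔ x ≤ y := Iff.rfl

instance : Zero Gm.{u} := ⟨mkG 0⟩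

instance : Add Gm.{u} := ⟨Quotient.lift₂ (fun x y : PGame.{u} => mkG (x + y))
  (fun a1 b1 a2 b2 ha hb => mkG_eq.2
    ⟨pg_le_trans (pg_add_le_add_right (pg_equiv_iff.1 ha).1 b1) (pg_add_le_add_left (pg_equiv_iff.1 hb).1 a2),
     pg_le_trans (pg_add_le_add_right (pg_equiv_iff.1 ha).2 b2) (pg_add_le_add_left (pg_equiv_iff.1 hb).2 a1)⟩)⟩

instance : Neg Gm.{u} := ⟨Quotient.lift (fun x : PGame.{u} => mkG (-x))
  (fun a b h => mkG_eq.2 ⟨pg_neg_le_neg_iff.2 (pg_equiv_iff.1 h).2,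
    pg_neg_le_neg_iff.2 (pg_equiv_iff.1 h).1⟩)⟩

instance : AddCommGroup Gm.{u} where
  add_assoc := Gm_ind fun a => Gm_ind fun b => Gm_ind fun c => mkG_eq.2 (pg_add_assoc_le a b c)
  zero_add := Gm_ind fun a => mkG_eq.2 (pg_zero_add_le a)
  add_zero := Gm_ind fun a => mkG_eq.2 ⟨pg_le_trans (pg_add_comm_le a 0) (pg_zero_add_le a).1,
    pg_le_trans (pg_zero_add_le a).2 (pg_add_comm_le 0 a)⟩
  add_comm := Gm_ind fun a => Gm_ind fun b => mkG_eq.2 ⟨pg_add_comm_le a b, pg_add_comm_le b a⟩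
  neg_add_cancel := Gm_ind fun a => mkG_eq.2 (pg_neg_add_le_zero a)
  nsmul := nsmulRec
  zsmul := zsmulRec

instance : PartialOrder Gm.{u} where
  le a b := a ≤ b
  le_refl := Gm_ind fun a => pg_le_refl a
  le_trans := Gm_ind fun a => Gm_ind fun b => Gm_ind fun c => fun h1 h2 => pg_le_trans h1 h2
  le_antisymm := Gm_ind fun a => Gm_ind fun b => fun h1 h2 => mkG_eq.2 ⟨h1, h2⟩

instance : IsOrderedAddMonoid Gm.{u} where
  add_le_add_left := Gm_ind fun a => Gm_ind fun b => fun h => Gm_ind fun c =>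
    pg_add_le_add_right h c

theorem mkG_lt {x y : PGame.{u}} : mkG x < mkG y ↔ x < y := Iff.rfl

theorem mkG_add (x y : PGame.{u}) : mkG (x + y) = mkG x + mkG y := rfl

theorem mkG_sub (x y : PGame.{u}) : mkG (x - y) = mkG x - mkG y := rfl

theorem G_lt1 {a b e f : Gm.{u}} (h2 : a < b) (h : f - e = b - a) : e < f := by
  rw [← sub_pos, h]; exact sub_pos.2 h2

theorem G_le1 {a b e f : Gm.{u}} (h1 : a ≤ b) (h : f - e = b - a) : e ≤ f := by
  rw [← sub_nonneg, h]; exact sub_nonneg.2 h1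

theorem G_lt2 {a b c d e f : Gm.{u}} (h1 : a ≤ b) (h2 : c < d)
    (h : f - e = (b - a) + (d - c)) : e < f := by
  rw [← sub_pos, h]; exact add_pos_of_nonneg_of_pos (sub_nonneg.2 h1) (sub_pos.2 h2)

theorem pg_lt_mk {a b : PGame.{u}} (h1 : a ≤ b) (h2 : ¬ b ≤ a) : a < b := ⟨h1, h2⟩

theorem pg_lt_trans {a b c : PGame.{u}} (h1 : a < b) (h2 : b < c) : a < c :=
  mkG_lt.1 (lt_trans (mkG_lt.2 h1) (mkG_lt.2 h2))

theorem pg_add_lt_add_right {a b : PGame.{u}} (h : a < b) (c : PGame.{u}) : a + c < b + c :=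
  mkG_lt.1 (G_lt1 (mkG_lt.2 h) (by rw [mkG_add, mkG_add]; abel))

theorem pg_add_lt_add_left {b c : PGame.{u}} (h : b < c) (a : PGame.{u}) : a + b < a + c :=
  mkG_lt.1 (G_lt1 (mkG_lt.2 h) (by rw [mkG_add, mkG_add]; abel))

theorem pg_neg_lt_neg {a b : PGame.{u}} (h : a < b) : -b < -a :=
  pg_lt_mk (pg_neg_le_neg_iff.2 h.1) (fun h' => h.2 (pg_neg_le_neg_iff.1 h'))

theorem pg_lt_of_lt_eq {a b c : PGame.{u}} (h : a < b) (e : mkG b = mkG c) : a < c :=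
  mkG_lt.1 (by rw [← e]; exact mkG_lt.2 h)

theorem pg_lt_of_eq_lt {a b c : PGame.{u}} (e : mkG a = mkG b) (h : b < c) : a < c :=
  mkG_lt.1 (by rw [e]; exact mkG_lt.2 h)

theorem pg_le_of_eqG {a b : PGame.{u}} (h : mkG a = mkG b) : a ≤ b := (mkG_eq.1 h).1

/-! Numeric games -/

theorem pg_numeric_mk_iff {xl xr : Type u} {xL : xl → PGame.{u}} {xR : xr → PGame.{u}} :
    Numeric (mk xl xr xL xR) ↔
      (∀ i j, xL i < xR j) ∧ (∀ i, Numeric (xL i)) ∧ ∀ j, Numeric (xR j) := Iff.rfl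

theorem pg_numeric_moveLeft {x : PGame.{u}} (hx : Numeric x) (i : x.LeftMoves) :
    Numeric (x.moveLeft i) := by
  cases x with
  | mk xl xr xL xR => exact (pg_numeric_mk_iff.1 hx).2.1 i

theorem pg_numeric_moveRight {x : PGame.{u}} (hx : Numeric x) (j : x.RightMoves) :
    Numeric (x.moveRight j) := by
  cases x with
  | mk xl xr xL xR => exact (pg_numeric_mk_iff.1 hx).2.2 j

theorem pg_moveLeft_lt_moveRight {x : PGame.{u}} (hx : Numeric x) (i : x.LeftMoves)
    (j : x.RightMoves) : x.moveLeft i < x.moveRight j := by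
  cases x with
  | mk xl xr xL xR => exact (pg_numeric_mk_iff.1 hx).1 i j

theorem pg_numeric_of_moves {x : PGame.{u}} (h1 : ∀ i j, x.moveLeft i < x.moveRight j)
    (h2 : ∀ i, Numeric (x.moveLeft i)) (h3 : ∀ j, Numeric (x.moveRight j)) : Numeric x := by
  cases x with
  | mk xl xr xL xR => exact pg_numeric_mk_iff.2 ⟨h1, h2, h3⟩

theorem pg_numeric_zero : Numeric (0 : PGame.{u}) :=
  pg_numeric_mk_iff.2 ⟨fun i => PEmpty.elim i, fun i => PEmpty.elim i, fun j => PEmpty.elim j⟩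

theorem pg_total (x : PGame.{u}) : ∀ y, Numeric x → Numeric y → x ≤ y ∨ y ≤ x := by
  induction x with
  | mk xl xr xL xR ihl ihr =>
    intro y hx hy
    cases y with
    | mk yl yr yL yR =>
      have hx' := pg_numeric_mk_iff.1 hx
      have hy' := pg_numeric_mk_iff.1 hy
      by_contra hc
      obtain ⟨h1, h2⟩ := not_or.1 hc
      rcases (pg_lf_iff _ _).1 h1 with ⟨i, hi⟩ | ⟨j, hj⟩ <;>
        rcases (pg_lf_iff _ _).1 h2 with ⟨i', hi'⟩ | ⟨j', hj'⟩
      · rcases ihl i _ (hx'.2.1 i) (hy'.2.1 i') with h | h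
        · exact pg_not_le_moveLeft (mk yl yr yL yR) i' (pg_le_trans hi h)
        · exact pg_not_le_moveLeft (mk xl xr xL xR) i (pg_le_trans hi' h)
      · exact (hx'.1 i j').2 (pg_le_trans hj' hi)
      · exact (hy'.1 i' j).2 (pg_le_trans hj hi')
      · rcases ihr j' _ (hx'.2.2 j') (hy'.2.2 j) with h | h
        · exact pg_not_moveRight_le (mk xl xr xL xR) j' (pg_le_trans h hj)
        · exact pg_not_moveRight_le (mk yl yr yL yR) j (pg_le_trans h hj')

theorem pg_moveLeft_lt {x : PGame.{u}} (hx : Numeric x) (i : x.LeftMoves) : x.moveLeft i < x :=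
  pg_lt_mk ((pg_total _ _ (pg_numeric_moveLeft hx i) hx).resolve_right (pg_not_le_moveLeft x i))
    (pg_not_le_moveLeft x i)

theorem pg_lt_moveRight {x : PGame.{u}} (hx : Numeric x) (j : x.RightMoves) : x < x.moveRight j :=
  pg_lt_mk ((pg_total _ _ hx (pg_numeric_moveRight hx j)).resolve_right (pg_not_moveRight_le x j))
    (pg_not_moveRight_le x j)

theorem pg_numeric_add (x : PGame.{u}) : ∀ y, Numeric x → Numeric y → Numeric (x + y) := by
  induction x with
  | mk xl xr xL xR ihxl ihxr =>
    intro y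
    induction y with
    | mk yl yr yL yR ihyl ihyr =>
      intro hx hy
      refine pg_numeric_of_moves ?_ ?_ ?_
      · rintro (i | k) (j | k')
        · exact pg_add_lt_add_right (pg_moveLeft_lt_moveRight hx i j) (mk yl yr yL yR)
        · exact pg_lt_trans (pg_add_lt_add_right (pg_moveLeft_lt hx i) (mk yl yr yL yR))
            (pg_add_lt_add_left (pg_lt_moveRight hy k') (mk xl xr xL xR))
        · exact pg_lt_trans (pg_add_lt_add_left (pg_moveLeft_lt hy k) (mk xl xr xL xR))
            (pg_add_lt_add_right (pg_lt_moveRight hx j) (mk yl yr yL yR))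
        · exact pg_add_lt_add_left (pg_moveLeft_lt_moveRight hy k k') (mk xl xr xL xR)
      · rintro (i | k)
        · exact ihxl i _ (pg_numeric_moveLeft hx i) hy
        · exact ihyl k hx (pg_numeric_moveLeft hy k)
      · rintro (j | k)
        · exact ihxr j _ (pg_numeric_moveRight hx j) hy
        · exact ihyr k hx (pg_numeric_moveRight hy k)

theorem pg_numeric_neg (x : PGame.{u}) : Numeric x → Numeric (-x) := by
  induction x with
  | mk xl xr xL xR ihl ihr =>
    intro hx
    refine pg_numeric_of_moves ?_ ?_ ?_
    · intro i j
      exact pg_neg_lt_neg (pg_moveLeft_lt_moveRight hx j i)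
    · intro i
      exact ihr i (pg_numeric_moveRight hx i)
    · intro j
      exact ihl j (pg_numeric_moveLeft hx j)

theorem pg_num_add {x y : PGame.{u}} (hx : Numeric x) (hy : Numeric y) : Numeric (x + y) :=
  pg_numeric_add x y hx hy

theorem pg_num_sub {x y : PGame.{u}} (hx : Numeric x) (hy : Numeric y) : Numeric (x - y) :=
  pg_numeric_add x (-y) hx (pg_numeric_neg y hy)

/-! Multiplication -/

theorem pg_mul_L1_lt {x y : PGame.{u}} (h : Numeric (x * y)) (i : x.LeftMoves)
    (k : y.LeftMoves) :
    mkG (x.moveLeft i * y) + mkG (x * y.moveLeft k) - mkG (x.moveLeft i * y.moveLeft k) <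
      mkG (x * y) := by
  cases x with
  | mk xl xr xL xR =>
    cases y with
    | mk yl yr yL yR => exact mkG_lt.2 (pg_moveLeft_lt h (Sum.inl (i, k)))

theorem pg_mul_L2_lt {x y : PGame.{u}} (h : Numeric (x * y)) (j : x.RightMoves)
    (k : y.RightMoves) :
    mkG (x.moveRight j * y) + mkG (x * y.moveRight k) - mkG (x.moveRight j * y.moveRight k) <
      mkG (x * y) := by
  cases x with
  | mk xl xr xL xR =>
    cases y with
    | mk yl yr yL yR => exact mkG_lt.2 (pg_moveLeft_lt h (Sum.inr (j, k)))

theorem pg_mul_R1_gt {x y : PGame.{u}} (h : Numeric (x * y)) (i : x.LeftMoves)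
    (k : y.RightMoves) :
    mkG (x * y) <
      mkG (x.moveLeft i * y) + mkG (x * y.moveRight k) - mkG (x.moveLeft i * y.moveRight k) := by
  cases x with
  | mk xl xr xL xR =>
    cases y with
    | mk yl yr yL yR => exact mkG_lt.2 (pg_lt_moveRight h (Sum.inl (i, k)))

theorem pg_mul_R2_gt {x y : PGame.{u}} (h : Numeric (x * y)) (j : x.RightMoves)
    (k : y.LeftMoves) :
    mkG (x * y) <
      mkG (x.moveRight j * y) + mkG (x * y.moveLeft k) - mkG (x.moveRight j * y.moveLeft k) := by
  cases x with
  | mk xl xr xL xR =>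
    cases y with
    | mk yl yr yL yR => exact mkG_lt.2 (pg_lt_moveRight h (Sum.inr (j, k)))

theorem pg_le_of_mul_opts {x1 x2 y : PGame.{u}}
    (h1 : ∀ i k, mkG (x1.moveLeft i * y) + mkG (x1 * y.moveLeft k) -
      mkG (x1.moveLeft i * y.moveLeft k) < mkG (x2 * y))
    (h2 : ∀ j k, mkG (x1.moveRight j * y) + mkG (x1 * y.moveRight k) -
      mkG (x1.moveRight j * y.moveRight k) < mkG (x2 * y))
    (h3 : ∀ i k, mkG (x1 * y) < mkG (x2.moveLeft i * y) + mkG (x2 * y.moveRight k) -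
      mkG (x2.moveLeft i * y.moveRight k))
    (h4 : ∀ j k, mkG (x1 * y) < mkG (x2.moveRight j * y) + mkG (x2 * y.moveLeft k) -
      mkG (x2.moveRight j * y.moveLeft k)) :
    x1 * y ≤ x2 * y := by
  cases x1 with
  | mk al ar aL aR =>
    cases x2 with
    | mk bl br bL bR =>
      cases y with
      | mk yl yr yL yR =>
        rw [pg_le_iff]
        refine ⟨?_, ?_⟩
        · rintro (⟨i, k⟩ | ⟨j, k⟩)
          · exact fun h' => (h1 i k).2 (mkG_le.2 h')
          · exact fun h' => (h2 j k).2 (mkG_le.2 h')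
        · rintro (⟨i, k⟩ | ⟨j, k⟩)
          · exact fun h' => (h3 i k).2 (mkG_le.2 h')
          · exact fun h' => (h4 j k).2 (mkG_le.2 h')

theorem pg_numeric_of_mul_opts {x y : PGame.{u}}
    (n1 : ∀ i k, Numeric (x.moveLeft i * y + x * y.moveLeft k - x.moveLeft i * y.moveLeft k))
    (n2 : ∀ j k, Numeric (x.moveRight j * y + x * y.moveRight k - x.moveRight j * y.moveRight k))
    (n3 : ∀ i k, Numeric (x.moveLeft i * y + x * y.moveRight k - x.moveLeft i * y.moveRight k))
    (n4 : ∀ j k, Numeric (x.moveRight j * y + x * y.moveLeft k - x.moveRight j * y.moveLeft k))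
    (l1 : ∀ i k i' k', mkG (x.moveLeft i * y) + mkG (x * y.moveLeft k) -
      mkG (x.moveLeft i * y.moveLeft k) < mkG (x.moveLeft i' * y) + mkG (x * y.moveRight k') -
      mkG (x.moveLeft i' * y.moveRight k'))
    (l2 : ∀ i k j' k', mkG (x.moveLeft i * y) + mkG (x * y.moveLeft k) -
      mkG (x.moveLeft i * y.moveLeft k) < mkG (x.moveRight j' * y) + mkG (x * y.moveLeft k') -
      mkG (x.moveRight j' * y.moveLeft k'))
    (l3 : ∀ j k i' k', mkG (x.moveRight j * y) + mkG (x * y.moveRight k) -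
      mkG (x.moveRight j * y.moveRight k) < mkG (x.moveLeft i' * y) + mkG (x * y.moveRight k') -
      mkG (x.moveLeft i' * y.moveRight k'))
    (l4 : ∀ j k j' k', mkG (x.moveRight j * y) + mkG (x * y.moveRight k) -
      mkG (x.moveRight j * y.moveRight k) < mkG (x.moveRight j' * y) + mkG (x * y.moveLeft k') -
      mkG (x.moveRight j' * y.moveLeft k')) :
    Numeric (x * y) := by
  cases x with
  | mk xl xr xL xR =>
    cases y with
    | mk yl yr yL yR =>
      refine pg_numeric_of_moves ?_ ?_ ?_
      · rintro (⟨i, k⟩ | ⟨j, k⟩) (⟨i', k'⟩ | ⟨j', k'⟩)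
        · exact mkG_lt.1 (l1 i k i' k')
        · exact mkG_lt.1 (l2 i k j' k')
        · exact mkG_lt.1 (l3 j k i' k')
        · exact mkG_lt.1 (l4 j k j' k')
      · rintro (⟨i, k⟩ | ⟨j, k⟩)
        · exact n1 i k
        · exact n2 j k
      · rintro (⟨i, k⟩ | ⟨j, k⟩)
        · exact n3 i k
        · exact n4 j k

theorem pg_mul_comm_of {x y : PGame.{u}}
    (h1 : ∀ i k, mkG (x.moveLeft i * y) + mkG (x * y.moveLeft k) -
      mkG (x.moveLeft i * y.moveLeft k) =
      mkG (y.moveLeft k * x) + mkG (y * x.moveLeft i) - mkG (y.moveLeft k * x.moveLeft i))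
    (h2 : ∀ j k, mkG (x.moveRight j * y) + mkG (x * y.moveRight k) -
      mkG (x.moveRight j * y.moveRight k) =
      mkG (y.moveRight k * x) + mkG (y * x.moveRight j) - mkG (y.moveRight k * x.moveRight j))
    (h3 : ∀ i k, mkG (x.moveLeft i * y) + mkG (x * y.moveRight k) -
      mkG (x.moveLeft i * y.moveRight k) =
      mkG (y.moveRight k * x) + mkG (y * x.moveLeft i) - mkG (y.moveRight k * x.moveLeft i))
    (h4 : ∀ j k, mkG (x.moveRight j * y) + mkG (x * y.moveLeft k) -
      mkG (x.moveRight j * y.moveLeft k) =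
      mkG (y.moveLeft k * x) + mkG (y * x.moveRight j) - mkG (y.moveLeft k * x.moveRight j)) :
    mkG (x * y) = mkG (y * x) := by
  cases x with
  | mk xl xr xL xR =>
    cases y with
    | mk yl yr yL yR =>
      refine mkG_eq.2 ⟨pg_le_of_moves ?_ ?_, pg_le_of_moves ?_ ?_⟩
      · rintro (⟨i, k⟩ | ⟨j, k⟩)
        · exact ⟨Sum.inl (k, i), pg_le_of_eqG (h1 i k)⟩
        · exact ⟨Sum.inr (k, j), pg_le_of_eqG (h2 j k)⟩
      · rintro (⟨k, j⟩ | ⟨k, i⟩)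
        · exact ⟨Sum.inr (j, k), pg_le_of_eqG (h4 j k)⟩
        · exact ⟨Sum.inl (i, k), pg_le_of_eqG (h3 i k)⟩
      · rintro (⟨k, i⟩ | ⟨k, j⟩)
        · exact ⟨Sum.inl (i, k), pg_le_of_eqG (h1 i k).symm⟩
        · exact ⟨Sum.inr (j, k), pg_le_of_eqG (h2 j k).symm⟩
      · rintro (⟨i, k⟩ | ⟨j, k⟩)
        · exact ⟨Sum.inr (k, i), pg_le_of_eqG (h3 i k).symm⟩
        · exact ⟨Sum.inl (k, j), pg_le_of_eqG (h4 j k).symm⟩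

theorem pg_mul_comm (x : PGame.{u}) : ∀ y, mkG (x * y) = mkG (y * x) := by
  induction x with
  | mk xl xr xL xR ihxl ihxr =>
    intro y
    induction y with
    | mk yl yr yL yR ihyl ihyr =>
      refine pg_mul_comm_of ?_ ?_ ?_ ?_
      · intro i k
        simp only [pg_moveLeft_mk, pg_moveRight_mk]
        rw [ihxl i (mk yl yr yL yR), ihyl k, ihxl i (yL k)]
        abel
      · intro j k
        simp only [pg_moveLeft_mk, pg_moveRight_mk]
        rw [ihxr j (mk yl yr yL yR), ihyr k, ihxr j (yR k)]
        abel
      · intro i k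
        simp only [pg_moveLeft_mk, pg_moveRight_mk]
        rw [ihxl i (mk yl yr yL yR), ihyr k, ihxl i (yR k)]
        abel
      · intro j k
        simp only [pg_moveLeft_mk, pg_moveRight_mk]
        rw [ihxr j (mk yl yr yL yR), ihyl k, ihxr j (yL k)]
        abel

theorem pg_mul_zero (x : PGame.{u}) : mkG (x * 0) = 0 := by
  cases x with
  | mk xl xr xL xR =>
    refine mkG_eq.2 ⟨pg_le_of_moves ?_ ?_, pg_le_of_moves ?_ ?_⟩
    · rintro (⟨_, ⟨⟩⟩ | ⟨_, ⟨⟩⟩)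
    · rintro ⟨⟩
    · rintro ⟨⟩
    · rintro (⟨_, ⟨⟩⟩ | ⟨_, ⟨⟩⟩)

def QQ (a b c d : PGame.{u}) : Prop := mkG (a * d) + mkG (b * c) < mkG (a * c) + mkG (b * d)

def QL (a b c d : PGame.{u}) : Prop := mkG (a * d) + mkG (b * c) ≤ mkG (a * c) + mkG (b * d)

def DD (x1 x2 y : PGame.{u}) : Prop :=
  (mkG x1 = mkG x2 → mkG (x1 * y) = mkG (x2 * y)) ∧
    (x1 < x2 → (∀ k, QQ x1 x2 (y.moveLeft k) y) ∧ ∀ k, QQ x1 x2 y (y.moveRight k))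

theorem QQ_swap {a b c d : PGame.{u}} (h : QQ a b c d) : QQ c d a b :=
  G_lt1 h (by rw [pg_mul_comm c b, pg_mul_comm d a, pg_mul_comm c a, pg_mul_comm d b]; abel)

theorem QL_swap {a b c d : PGame.{u}} (h : QL a b c d) : QL c d a b :=
  G_le1 h (by rw [pg_mul_comm c b, pg_mul_comm d a, pg_mul_comm c a, pg_mul_comm d b]; abel)

theorem QL_L {a b w : PGame.{u}} {k : w.LeftMoves} (hab : a ≤ b) (hD : DD a b w)
    (hD' : DD a b (w.moveLeft k)) : QL a b (w.moveLeft k) w := by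
  by_cases hba : b ≤ a
  · have e : mkG a = mkG b := mkG_eq.2 ⟨hab, hba⟩
    unfold QL
    rw [hD.1 e, hD'.1 e]
    exact le_of_eq (add_comm _ _)
  · exact le_of_lt ((hD.2 (pg_lt_mk hab hba)).1 k)

theorem QL_R {a b w : PGame.{u}} {k : w.RightMoves} (hab : a ≤ b) (hD : DD a b w)
    (hD' : DD a b (w.moveRight k)) : QL a b w (w.moveRight k) := by
  by_cases hba : b ≤ a
  · have e : mkG a = mkG b := mkG_eq.2 ⟨hab, hba⟩
    unfold QL
    rw [hD.1 e, hD'.1 e]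
    exact le_of_eq (add_comm _ _)
  · exact le_of_lt ((hD.2 (pg_lt_mk hab hba)).2 k)

def IsOpt (a x : PGame.{u}) : Prop := (∃ i, a = x.moveLeft i) ∨ ∃ j, a = x.moveRight j

theorem pg_optL (x : PGame.{u}) (i : x.LeftMoves) : IsOpt (x.moveLeft i) x := Or.inl ⟨i, rfl⟩

theorem pg_optR (x : PGame.{u}) (j : x.RightMoves) : IsOpt (x.moveRight j) x := Or.inr ⟨j, rfl⟩

theorem pg_isOpt_wf : WellFounded (IsOpt.{u}) := by
  refine ⟨fun x => ?_⟩
  induction x with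
  | mk l r L R ihl ihr =>
    refine Acc.intro _ fun a h => ?_
    rcases h with ⟨i, rfl⟩ | ⟨j, rfl⟩
    · exact ihl i
    · exact ihr j

theorem pg_numeric_of_isOpt {a x : PGame.{u}} (hx : Numeric x) (h : IsOpt a x) : Numeric a := by
  rcases h with ⟨i, rfl⟩ | ⟨j, rfl⟩
  · exact pg_numeric_moveLeft hx i
  · exact pg_numeric_moveRight hx j

theorem pg_numeric_mul_step {x y : PGame.{u}} (hx : Numeric x) (hy : Numeric y)
    (hNa : ∀ a, IsOpt a x → Numeric (a * y))
    (hNab : ∀ a w, IsOpt a x → IsOpt w y → Numeric (a * w))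
    (hNb : ∀ w, IsOpt w y → Numeric (x * w))
    (hD1 : ∀ a1 a2, IsOpt a1 x → IsOpt a2 x → DD a1 a2 y)
    (hD1' : ∀ a1 a2 w, IsOpt a1 x → IsOpt a2 x → IsOpt w y → DD a1 a2 w)
    (hD2 : ∀ p1 p2, IsOpt p1 y → IsOpt p2 y → DD p1 p2 x)
    (hD2' : ∀ p1 p2 a, IsOpt p1 y → IsOpt p2 y → IsOpt a x → DD p1 p2 a) :
    Numeric (x * y) := by
  have nxl := pg_numeric_moveLeft hx
  have nxr := pg_numeric_moveRight hx
  have nyl := pg_numeric_moveLeft hy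
  have nyr := pg_numeric_moveRight hy
  refine pg_numeric_of_mul_opts ?_ ?_ ?_ ?_ ?_ ?_ ?_ ?_
  · intro i k
    exact pg_num_sub (pg_num_add (hNa _ (pg_optL x i)) (hNb _ (pg_optL y k)))
      (hNab _ _ (pg_optL x i) (pg_optL y k))
  · intro j k
    exact pg_num_sub (pg_num_add (hNa _ (pg_optR x j)) (hNb _ (pg_optR y k)))
      (hNab _ _ (pg_optR x j) (pg_optR y k))
  · intro i k
    exact pg_num_sub (pg_num_add (hNa _ (pg_optL x i)) (hNb _ (pg_optR y k)))
      (hNab _ _ (pg_optL x i) (pg_optR y k))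
  · intro j k
    exact pg_num_sub (pg_num_add (hNa _ (pg_optR x j)) (hNb _ (pg_optL y k)))
      (hNab _ _ (pg_optR x j) (pg_optL y k))
  · intro i k i' k'
    have hpq := pg_moveLeft_lt_moveRight hy k k'
    rcases pg_total _ _ (nxl i) (nxl i') with h | h
    · have hq : QL (x.moveLeft i) (x.moveLeft i') (y.moveLeft k) y :=
        QL_L h (hD1 _ _ (pg_optL x i) (pg_optL x i'))
          (hD1' _ _ _ (pg_optL x i) (pg_optL x i') (pg_optL y k))
      have hQ : QQ (x.moveLeft i') x (y.moveLeft k) (y.moveRight k') :=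
        QQ_swap (((hD2 _ _ (pg_optL y k) (pg_optR y k')).2 hpq).1 i')
      exact G_lt2 hq hQ (by abel)
    · have hq : QL (x.moveLeft i') (x.moveLeft i) y (y.moveRight k') :=
        QL_R h (hD1 _ _ (pg_optL x i') (pg_optL x i))
          (hD1' _ _ _ (pg_optL x i') (pg_optL x i) (pg_optR y k'))
      have hQ : QQ (x.moveLeft i) x (y.moveLeft k) (y.moveRight k') :=
        QQ_swap (((hD2 _ _ (pg_optL y k) (pg_optR y k')).2 hpq).1 i)
      exact G_lt2 hq hQ (by abel)
  · intro i k j k'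
    have hab : x.moveLeft i < x.moveRight j := pg_moveLeft_lt_moveRight hx i j
    rcases pg_total _ _ (nyl k) (nyl k') with h | h
    · have hq : QL (x.moveLeft i) x (y.moveLeft k) (y.moveLeft k') :=
        QL_swap (QL_L h (hD2 _ _ (pg_optL y k) (pg_optL y k'))
          (hD2' _ _ _ (pg_optL y k) (pg_optL y k') (pg_optL x i)))
      have hQ : QQ (x.moveLeft i) (x.moveRight j) (y.moveLeft k') y :=
        ((hD1 _ _ (pg_optL x i) (pg_optR x j)).2 hab).1 k'
      exact G_lt2 hq hQ (by abel)
    · have hq : QL x (x.moveRight j) (y.moveLeft k') (y.moveLeft k) :=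
        QL_swap (QL_R h (hD2 _ _ (pg_optL y k') (pg_optL y k))
          (hD2' _ _ _ (pg_optL y k') (pg_optL y k) (pg_optR x j)))
      have hQ : QQ (x.moveLeft i) (x.moveRight j) (y.moveLeft k) y :=
        ((hD1 _ _ (pg_optL x i) (pg_optR x j)).2 hab).1 k
      exact G_lt2 hq hQ (by abel)
  · intro j k i k'
    have hab : x.moveLeft i < x.moveRight j := pg_moveLeft_lt_moveRight hx i j
    rcases pg_total _ _ (nyr k) (nyr k') with h | h
    · have hq : QL (x.moveLeft i) x (y.moveRight k) (y.moveRight k') :=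
        QL_swap (QL_L h (hD2 _ _ (pg_optR y k) (pg_optR y k'))
          (hD2' _ _ _ (pg_optR y k) (pg_optR y k') (pg_optL x i)))
      have hQ : QQ (x.moveLeft i) (x.moveRight j) y (y.moveRight k) :=
        ((hD1 _ _ (pg_optL x i) (pg_optR x j)).2 hab).2 k
      exact G_lt2 hq hQ (by abel)
    · have hq : QL x (x.moveRight j) (y.moveRight k') (y.moveRight k) :=
        QL_swap (QL_R h (hD2 _ _ (pg_optR y k') (pg_optR y k))
          (hD2' _ _ _ (pg_optR y k') (pg_optR y k) (pg_optR x j)))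
      have hQ : QQ (x.moveLeft i) (x.moveRight j) y (y.moveRight k') :=
        ((hD1 _ _ (pg_optL x i) (pg_optR x j)).2 hab).2 k'
      exact G_lt2 hq hQ (by abel)
  · intro j k j' k'
    have hpq : y.moveLeft k' < y.moveRight k := pg_moveLeft_lt_moveRight hy k' k
    rcases pg_total _ _ (nxr j) (nxr j') with h | h
    · have hq : QL (x.moveRight j) (x.moveRight j') (y.moveLeft k') y :=
        QL_L h (hD1 _ _ (pg_optR x j) (pg_optR x j'))
          (hD1' _ _ _ (pg_optR x j) (pg_optR x j') (pg_optL y k'))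
      have hQ : QQ x (x.moveRight j) (y.moveLeft k') (y.moveRight k) :=
        QQ_swap (((hD2 _ _ (pg_optL y k') (pg_optR y k)).2 hpq).2 j)
      exact G_lt2 hq hQ (by abel)
    · have hq : QL (x.moveRight j') (x.moveRight j) y (y.moveRight k) :=
        QL_R h (hD1 _ _ (pg_optR x j') (pg_optR x j))
          (hD1' _ _ _ (pg_optR x j') (pg_optR x j) (pg_optR y k))
      have hQ : QQ x (x.moveRight j') (y.moveLeft k') (y.moveRight k) :=
        QQ_swap (((hD2 _ _ (pg_optL y k') (pg_optR y k)).2 hpq).2 j')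
      exact G_lt2 hq hQ (by abel)

theorem pg_B_half {x1 x2 y : PGame.{u}} (e : mkG x1 = mkG x2) (hx1 : Numeric x1)
    (hx2 : Numeric x2)
    (eqL : ∀ k, mkG (x1 * y.moveLeft k) = mkG (x2 * y.moveLeft k))
    (eqR : ∀ k, mkG (x1 * y.moveRight k) = mkG (x2 * y.moveRight k))
    (hA : ∀ i, DD (x1.moveLeft i) x2 y) (hB : ∀ j, DD x2 (x1.moveRight j) y)
    (hA' : ∀ i, DD (x2.moveLeft i) x1 y) (hB' : ∀ j, DD x1 (x2.moveRight j) y) :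
    x1 * y ≤ x2 * y := by
  refine pg_le_of_mul_opts ?_ ?_ ?_ ?_
  · intro i k
    have h := ((hA i).2 (pg_lt_of_lt_eq (pg_moveLeft_lt hx1 i) e)).1 k
    exact G_lt1 h (by rw [eqL k]; abel)
  · intro j k
    have h := ((hB j).2 (pg_lt_of_eq_lt e.symm (pg_lt_moveRight hx1 j))).2 k
    exact G_lt1 h (by rw [eqR k]; abel)
  · intro i k
    have h := ((hA' i).2 (pg_lt_of_lt_eq (pg_moveLeft_lt hx2 i) e.symm)).2 k
    exact G_lt1 h (by rw [eqR k]; abel)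
  · intro j k
    have h := ((hB' j).2 (pg_lt_of_eq_lt e (pg_lt_moveRight hx2 j))).1 k
    exact G_lt1 h (by rw [eqL k]; abel)

theorem pg_D_step {x1 x2 y : PGame.{u}} (hx1 : Numeric x1) (hx2 : Numeric x2)
    (hN1 : Numeric (x1 * y)) (hN2 : Numeric (x2 * y))
    (ihA : ∀ a, IsOpt a x2 → DD x1 a y) (ihA' : ∀ a w, IsOpt a x2 → IsOpt w y → DD x1 a w)
    (ihB : ∀ b, IsOpt b x1 → DD b x2 y) (ihB' : ∀ b w, IsOpt b x1 → IsOpt w y → DD b x2 w)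
    (ihC : ∀ w, IsOpt w y → DD x1 x2 w)
    (ihE : ∀ a, IsOpt a x1 → DD x2 a y) (ihF : ∀ a, IsOpt a x2 → DD a x1 y) :
    DD x1 x2 y := by
  refine ⟨fun e => ?_, fun hlt => ?_⟩
  · have eqL : ∀ k, mkG (x1 * y.moveLeft k) = mkG (x2 * y.moveLeft k) :=
      fun k => (ihC _ (pg_optL y k)).1 e
    have eqR : ∀ k, mkG (x1 * y.moveRight k) = mkG (x2 * y.moveRight k) :=
      fun k => (ihC _ (pg_optR y k)).1 e
    exact le_antisymm
      (mkG_le.2 (pg_B_half e hx1 hx2 eqL eqR (fun i => ihB _ (pg_optL x1 i))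
        (fun j => ihE _ (pg_optR x1 j)) (fun i => ihF _ (pg_optL x2 i))
        (fun j => ihA _ (pg_optR x2 j))))
      (mkG_le.2 (pg_B_half e.symm hx2 hx1 (fun k => (eqL k).symm) (fun k => (eqR k).symm)
        (fun i => ihF _ (pg_optL x2 i)) (fun j => ihA _ (pg_optR x2 j))
        (fun i => ihB _ (pg_optL x1 i)) (fun j => ihE _ (pg_optR x1 j))))
  · rcases (pg_lf_iff _ _).1 hlt.2 with ⟨i, hi⟩ | ⟨j, hj⟩
    · refine ⟨fun k => ?_, fun k => ?_⟩
      · have hq : QL x1 (x2.moveLeft i) (y.moveLeft k) y :=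
          QL_L hi (ihA _ (pg_optL x2 i)) (ihA' _ _ (pg_optL x2 i) (pg_optL y k))
        exact G_lt2 hq (pg_mul_L1_lt hN2 i k) (by abel)
      · have hq : QL x1 (x2.moveLeft i) y (y.moveRight k) :=
          QL_R hi (ihA _ (pg_optL x2 i)) (ihA' _ _ (pg_optL x2 i) (pg_optR y k))
        exact G_lt2 hq (pg_mul_R1_gt hN2 i k) (by abel)
    · refine ⟨fun k => ?_, fun k => ?_⟩
      · have hq : QL (x1.moveRight j) x2 (y.moveLeft k) y :=
          QL_L hj (ihB _ (pg_optR x1 j)) (ihB' _ _ (pg_optR x1 j) (pg_optL y k))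
        exact G_lt2 hq (pg_mul_R2_gt hN1 j k) (by abel)
      · have hq : QL (x1.moveRight j) x2 y (y.moveRight k) :=
          QL_R hj (ihB _ (pg_optR x1 j)) (ihB' _ _ (pg_optR x1 j) (pg_optR y k))
        exact G_lt2 hq (pg_mul_L2_lt hN1 j k) (by abel)

def pgR : Multiset PGame.{u} → Multiset PGame.{u} → Prop :=
  Relation.TransGen (Relation.CutExpand IsOpt)

theorem pgR_wf : WellFounded (pgR.{u}) := pg_isOpt_wf.cutExpand.transGen

theorem pgR_trans {a b c : Multiset PGame.{u}} (h1 : pgR a b) (h2 : pgR b c) : pgR a c :=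
  Relation.TransGen.trans h1 h2

theorem pgR_one {a x : PGame.{u}} (h : IsOpt a x) (u : Multiset PGame.{u})
    {s t : Multiset PGame.{u}} (hs : s = u + {a}) (ht : t = u + {x}) : pgR s t := by
  subst hs ht
  refine Relation.TransGen.single ⟨{a}, x, fun z hz => ?_, by abel⟩
  rw [Multiset.mem_singleton.1 hz]
  exact h

theorem pgR_two {a b x : PGame.{u}} (ha : IsOpt a x) (hb : IsOpt b x) (u : Multiset PGame.{u})
    {s t : Multiset PGame.{u}} (hs : s = u + {a} + {b}) (ht : t = u + {x}) : pgR s t := by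
  subst hs ht
  refine Relation.TransGen.single ⟨{a} + {b}, x, fun z hz => ?_, by abel⟩
  rcases Multiset.mem_add.1 hz with h | h
  · rw [Multiset.mem_singleton.1 h]; exact ha
  · rw [Multiset.mem_singleton.1 h]; exact hb

theorem pgR_drop {x : PGame.{u}} (u : Multiset PGame.{u})
    {s t : Multiset PGame.{u}} (hs : s = u) (ht : t = u + {x}) : pgR s t := by
  subst hs ht
  refine Relation.TransGen.single ⟨0, x, fun z hz => ?_, by simp⟩
  simp at hz

theorem pg_num2 {a b : PGame.{u}} (ha : Numeric a) (hb : Numeric b) :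
    ∀ z ∈ ({a} + {b} : Multiset PGame.{u}), Numeric z := by
  intro z hz
  rcases Multiset.mem_add.1 hz with h | h
  · rw [Multiset.mem_singleton.1 h]; exact ha
  · rw [Multiset.mem_singleton.1 h]; exact hb

theorem pg_num3 {a b c : PGame.{u}} (ha : Numeric a) (hb : Numeric b) (hc : Numeric c) :
    ∀ z ∈ ({a} + {b} + {c} : Multiset PGame.{u}), Numeric z := by
  intro z hz
  rcases Multiset.mem_add.1 hz with h | h
  · exact pg_num2 ha hb z h
  · rw [Multiset.mem_singleton.1 h]; exact hc

theorem pg_main (s : Multiset PGame.{u}) : (∀ z ∈ s, Numeric z) →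
    (∀ x y, s = {x} + {y} → Numeric (x * y)) ∧
      (∀ x1 x2 y, s = {x1} + {x2} + {y} → DD x1 x2 y) := by
  refine WellFounded.induction (C := fun s : Multiset PGame.{u} => (∀ z ∈ s, Numeric z) →
    (∀ x y, s = {x} + {y} → Numeric (x * y)) ∧
      (∀ x1 x2 y, s = {x1} + {x2} + {y} → DD x1 x2 y)) pgR_wf s ?_
  intro s ih hs
  refine ⟨?_, ?_⟩
  · rintro x y rfl
    have hx : Numeric x := hs x (by simp)
    have hy : Numeric y := hs y (by simp)
    have IHN : ∀ a b, Numeric a → Numeric b → pgR ({a} + {b}) ({x} + {y}) → Numeric (a * b) :=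
      fun a b ha hb hr => (ih _ hr (pg_num2 ha hb)).1 a b rfl
    have IHD : ∀ a b c, Numeric a → Numeric b → Numeric c →
        pgR ({a} + {b} + {c}) ({x} + {y}) → DD a b c :=
      fun a b c ha hb hc hr => (ih _ hr (pg_num3 ha hb hc)).2 a b c rfl
    refine pg_numeric_mul_step hx hy ?_ ?_ ?_ ?_ ?_ ?_ ?_
    · intro a ha
      exact IHN a y (pg_numeric_of_isOpt hx ha) hy (pgR_one ha {y} (by abel) (by abel))
    · intro a w ha hw
      exact IHN a w (pg_numeric_of_isOpt hx ha) (pg_numeric_of_isOpt hy hw)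
        (pgR_trans (pgR_one hw {a} rfl rfl) (pgR_one ha {y} (by abel) (by abel)))
    · intro w hw
      exact IHN x w hx (pg_numeric_of_isOpt hy hw) (pgR_one hw {x} rfl rfl)
    · intro a1 a2 h1 h2
      exact IHD a1 a2 y (pg_numeric_of_isOpt hx h1) (pg_numeric_of_isOpt hx h2) hy
        (pgR_two h1 h2 {y} (by abel) (by abel))
    · intro a1 a2 w h1 h2 hw
      exact IHD a1 a2 w (pg_numeric_of_isOpt hx h1) (pg_numeric_of_isOpt hx h2)
        (pg_numeric_of_isOpt hy hw)
        (pgR_trans (pgR_one hw ({a1} + {a2}) rfl rfl) (pgR_two h1 h2 {y} (by abel) (by abel)))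
    · intro p1 p2 h1 h2
      exact IHD p1 p2 x (pg_numeric_of_isOpt hy h1) (pg_numeric_of_isOpt hy h2) hx
        (pgR_two h1 h2 {x} (by abel) rfl)
    · intro p1 p2 a h1 h2 ha
      exact IHD p1 p2 a (pg_numeric_of_isOpt hy h1) (pg_numeric_of_isOpt hy h2)
        (pg_numeric_of_isOpt hx ha)
        (pgR_trans (pgR_one ha ({p1} + {p2}) rfl rfl) (pgR_two h1 h2 {x} (by abel) rfl))
  · rintro x1 x2 y rfl
    have hx1 : Numeric x1 := hs x1 (by simp)
    have hx2 : Numeric x2 := hs x2 (by simp)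
    have hy : Numeric y := hs y (by simp)
    have IHN : ∀ a b, Numeric a → Numeric b →
        pgR ({a} + {b}) ({x1} + {x2} + {y}) → Numeric (a * b) :=
      fun a b ha hb hr => (ih _ hr (pg_num2 ha hb)).1 a b rfl
    have IHD : ∀ a b c, Numeric a → Numeric b → Numeric c →
        pgR ({a} + {b} + {c}) ({x1} + {x2} + {y}) → DD a b c :=
      fun a b c ha hb hc hr => (ih _ hr (pg_num3 ha hb hc)).2 a b c rfl
    refine pg_D_step hx1 hx2 ?_ ?_ ?_ ?_ ?_ ?_ ?_ ?_ ?_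
    · exact IHN x1 y hx1 hy (pgR_drop (x := x2) ({x1} + {y}) rfl (by abel))
    · exact IHN x2 y hx2 hy (pgR_drop (x := x1) ({x2} + {y}) rfl (by abel))
    · intro a ha
      exact IHD x1 a y hx1 (pg_numeric_of_isOpt hx2 ha) hy
        (pgR_one ha ({x1} + {y}) (by abel) (by abel))
    · intro a w ha hw
      exact IHD x1 a w hx1 (pg_numeric_of_isOpt hx2 ha) (pg_numeric_of_isOpt hy hw)
        (pgR_trans (pgR_one hw ({x1} + {a}) rfl rfl) (pgR_one ha ({x1} + {y}) (by abel) (by abel)))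
    · intro b hb
      exact IHD b x2 y (pg_numeric_of_isOpt hx1 hb) hx2 hy
        (pgR_one hb ({x2} + {y}) (by abel) (by abel))
    · intro b w hb hw
      exact IHD b x2 w (pg_numeric_of_isOpt hx1 hb) hx2 (pg_numeric_of_isOpt hy hw)
        (pgR_trans (pgR_one hw ({b} + {x2}) rfl rfl) (pgR_one hb ({x2} + {y}) (by abel) (by abel)))
    · intro w hw
      exact IHD x1 x2 w hx1 hx2 (pg_numeric_of_isOpt hy hw) (pgR_one hw ({x1} + {x2}) rfl rfl)
    · intro a ha
      exact IHD x2 a y hx2 (pg_numeric_of_isOpt hx1 ha) hy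
        (pgR_one ha ({x2} + {y}) (by abel) (by abel))
    · intro a ha
      exact IHD a x1 y (pg_numeric_of_isOpt hx2 ha) hx1 hy
        (pgR_one ha ({x1} + {y}) (by abel) (by abel))

theorem pg_Q_step {x1 x2 y1 y2 : PGame.{u}} (hx1 : Numeric x1) (hx2 : Numeric x2) (hx : x1 < x2)
    (hD : ∀ a b c : PGame.{u}, Numeric a → Numeric b → Numeric c → DD a b c)
    (hy1 : Numeric y1) (hy2 : Numeric y2) (hy : y1 < y2)
    (ihL : ∀ i, y1 < y2.moveLeft i → QQ x1 x2 y1 (y2.moveLeft i))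
    (ihR : ∀ j, y1.moveRight j < y2 → QQ x1 x2 (y1.moveRight j) y2) : QQ x1 x2 y1 y2 := by
  rcases (pg_lf_iff _ _).1 hy.2 with ⟨i, hi⟩ | ⟨j, hj⟩
  · have hq : QQ x1 x2 (y2.moveLeft i) y2 := ((hD x1 x2 y2 hx1 hx2 hy2).2 hx).1 i
    have hle : QL x1 x2 y1 (y2.moveLeft i) := by
      by_cases h : y2.moveLeft i ≤ y1
      · have e : mkG y1 = mkG (y2.moveLeft i) := mkG_eq.2 ⟨hi, h⟩
        have e1 := (hD _ _ x1 hy1 (pg_numeric_moveLeft hy2 i) hx1).1 e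
        have e2 := (hD _ _ x2 hy1 (pg_numeric_moveLeft hy2 i) hx2).1 e
        have : mkG (x1 * y2.moveLeft i) + mkG (x2 * y1) =
            mkG (x1 * y1) + mkG (x2 * y2.moveLeft i) := by
          rw [pg_mul_comm x1 (y2.moveLeft i), pg_mul_comm x2 y1, pg_mul_comm x1 y1,
            pg_mul_comm x2 (y2.moveLeft i), e1, e2]
        exact le_of_eq this
      · exact le_of_lt (ihL i (pg_lt_mk hi h))
    exact G_lt2 hle hq (by abel)
  · have hq : QQ x1 x2 y1 (y1.moveRight j) := ((hD x1 x2 y1 hx1 hx2 hy1).2 hx).2 j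
    have hle : QL x1 x2 (y1.moveRight j) y2 := by
      by_cases h : y2 ≤ y1.moveRight j
      · have e : mkG (y1.moveRight j) = mkG y2 := mkG_eq.2 ⟨hj, h⟩
        have e1 := (hD _ _ x1 (pg_numeric_moveRight hy1 j) hy2 hx1).1 e
        have e2 := (hD _ _ x2 (pg_numeric_moveRight hy1 j) hy2 hx2).1 e
        have : mkG (x1 * y2) + mkG (x2 * y1.moveRight j) =
            mkG (x1 * y1.moveRight j) + mkG (x2 * y2) := by
          rw [pg_mul_comm x1 y2, pg_mul_comm x2 (y1.moveRight j), pg_mul_comm x1 (y1.moveRight j),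
            pg_mul_comm x2 y2, e1, e2]
        exact le_of_eq this
      · exact le_of_lt (ihR j (pg_lt_mk hj h))
    exact G_lt2 hle hq (by abel)

theorem pg_Q_general {x1 x2 : PGame.{u}} (hx1 : Numeric x1) (hx2 : Numeric x2) (hx : x1 < x2)
    (hD : ∀ a b c : PGame.{u}, Numeric a → Numeric b → Numeric c → DD a b c) (y1 : PGame.{u}) :
    ∀ y2, Numeric y1 → Numeric y2 → y1 < y2 → QQ x1 x2 y1 y2 := by
  induction y1 with
  | mk l1 r1 L1 R1 ih1 ih1' =>
    intro y2
    induction y2 with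
    | mk l2 r2 L2 R2 ih2 ih2' =>
      intro hy1 hy2 hy
      exact pg_Q_step hx1 hx2 hx hD hy1 hy2 hy
        (fun i h => ih2 i hy1 (pg_numeric_moveLeft hy2 i) h)
        (fun j h => ih1' j _ (pg_numeric_moveRight hy1 j) hy2 h)

end

end PGame
end SetTheory


/-- If `x₁ < x₂` and `y₁ < y₂` are numbers, then
`x₁·y₂ + x₂·y₁ < x₁·y₁ + x₂·y₂`; in particular, multiplication by a positive
number `y` is strictly monotone. -/
theorem mul_strict_mono (x₁ x₂ y₁ y₂ : PGame)
    (hx₁ : x₁.Numeric) (hx₂ : x₂.Numeric) (hy₁ : y₁.Numeric) (hy₂ : y₂.Numeric)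
    (hx : x₁ < x₂) (hy : y₁ < y₂) :
    (x₁ * y₂ + x₂ * y₁ < x₁ * y₁ + x₂ * y₂) ∧
    (∀ y : PGame, y.Numeric → 0 < y → x₁ * y < x₂ * y) := by
  have hD : ∀ a b c : PGame, a.Numeric → b.Numeric → c.Numeric → SetTheory.PGame.DD a b c :=
    fun a b c ha hb hc => (SetTheory.PGame.pg_main _ (SetTheory.PGame.pg_num3 ha hb hc)).2 a b c rfl
  refine ⟨?_, ?_⟩
  · exact SetTheory.PGame.pg_Q_general hx₁ hx₂ hx hD y₁ y₂ hy₁ hy₂ hy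
  · intro y hy' hpos
    have h := SetTheory.PGame.pg_Q_general hx₁ hx₂ hx hD 0 y SetTheory.PGame.pg_numeric_zero hy' hpos
    have h' : SetTheory.PGame.mkG (x₁ * y) < SetTheory.PGame.mkG (x₂ * y) := by
      unfold SetTheory.PGame.QQ at h
      rw [SetTheory.PGame.pg_mul_zero, SetTheory.PGame.pg_mul_zero, add_zero, zero_add] at h
      exact h
    exact h'
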